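/- arXiv:2506.23346 — 5 statements merged into one kernel-verified Lean document; each statement's English description precedes it below -/
import Mathlib

section
/- Viability from MPC feasibility: for a state x, if for some natural number h there exists a control sequence u : ℕ → U with l (traj x u k) ≥ 0 for all k < h and traj x u h ∈ V, then x ∈ V. -/
def traj {X U : Type*} (f : X → U → X) (x : X) (u : ℕ → U) : ℕ → X
  | 0 => x
  | k + 1 => f (traj f x u k) (u k)

def viab {X U : Type*} (f : X → U → X) (l : X → ℝ) : Set X :=
  {x | ∃ u : ℕ → U, ∀ k : ℕ, l (traj f x u k) ≥ 0}

lemma traj_congr {X U : Type*} (f : X → U → X) (x : X) (u v : ℕ → U) (n : ℕ)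
    (huv : ∀ k < n, u k = v k) : traj f x u n = traj f x v n := by
  induction n with
  | zero => rfl
  | succ m ih =>
    simp only [traj]
    rw [ih (fun k hk => huv k (hk.trans (Nat.lt_succ_self m))),
      huv m (Nat.lt_succ_self m)]

lemma traj_shift {X U : Type*} (f : X → U → X) (x : X) (w : ℕ → U) (h n : ℕ) :
    traj f x w (h + n) = traj f (traj f x w h) (fun k => w (h + k)) n := by
  induction n with
  | zero => rfl
  | succ m ih => rw [Nat.add_succ, traj, traj, ih]

theorem viable_of_mpc_feasible {X U : Type*} (f : X → U → X) (l : X → ℝ)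
    (x : X) (h : ℕ)
    (hfeas : ∃ u : ℕ → U, (∀ k < h, l (traj f x u k) ≥ 0) ∧ traj f x u h ∈ viab f l) :
    x ∈ viab f l := by
  obtain ⟨u, hu, v, hv⟩ := hfeas
  refine ⟨fun k => if k < h then u k else v (k - h), fun k => ?_⟩
  set w : ℕ → U := fun k => if k < h then u k else v (k - h) with hw
  have hwh : traj f x w h = traj f x u h :=
    traj_congr f x w u h (fun k hk => by simp [hw, hk])
  rcases lt_or_ge k h with hk | hk
  · rw [traj_congr f x w u k (fun j hj => by simp [hw, hj.trans hk])]
    exact hu k hk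
  · obtain ⟨n, rfl⟩ := Nat.exists_eq_add_of_le hk
    rw [traj_shift, hwh]
    have : (fun j => w (h + j)) = v := by
      funext j; simp [hw, Nat.add_sub_cancel_left]
    rw [this]
    exact hv n
end

section
/- Intermediate states of a feasible MPC solution are viable: if a control sequence u : ℕ → U satisfies l (traj x u k) ≥ 0 for all k < h and traj x u h ∈ V, then traj x u j ∈ V for every j ≤ h. -/
theorem intermediate_states_viable {X U : Type*} (f : X → U → X) (l : X → ℝ)
    (x : X) (u : ℕ → U) (h : ℕ)
    (hrun : ∀ k < h, l (traj f x u k) ≥ 0) (hterm : traj f x u h ∈ viab f l) :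
    ∀ j ≤ h, traj f x u j ∈ viab f l := by
  intro j hj
  obtain ⟨u', hu'⟩ := hterm
  set d := h - j with hd
  set w : ℕ → U := fun k => if k < d then u (j + k) else u' (k - d) with hw
  have key : ∀ k, (k ≤ d → traj f (traj f x u j) w k = traj f x u (j + k)) ∧
      (d ≤ k → traj f (traj f x u j) w k = traj f (traj f x u h) u' (k - d)) := by
    intro k
    induction k with
    | zero =>
      constructor
      · intro; simp [traj]
      · intro h0
        have : d = 0 := Nat.le_zero.mp h0
        simp [traj, this, hd] at *
        have : j = h := by omega
        simp [this, traj]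
    | succ k ih =>
      constructor
      · intro hk
        have hk' : k < d := hk
        have := ih.1 (le_of_lt hk')
        simp [traj, this, hw, hk', Nat.add_succ]
        rw [← hw, this]
      · intro hk
        rcases Nat.lt_or_ge k d with hlt | hge
        · have hkd : k + 1 = d := by omega
          have := ih.1 (le_of_lt hlt)
          simp only [traj, this, hw]
          have hjd : j + d = h := by omega
          have hjd' : j + d = j + k + 1 := by omega
          simp [hlt, hkd, ← hjd, hjd', traj, Nat.add_sub_cancel_left]
          rw [← hw, this]
        · have := ih.2 hge
          have hnlt : ¬ k < d := not_lt.mpr hge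
          simp only [traj, this, hw]
          simp [hnlt, Nat.succ_sub hge, traj]
          rw [← hw, this]
  refine ⟨w, fun k => ?_⟩
  rcases Nat.lt_or_ge k d with hlt | hge
  · rw [(key k).1 (le_of_lt hlt)]
    exact hrun _ (by omega)
  · rw [(key k).2 hge]
    exact hu' _
end

section
/- Maximality of the viability kernel: if a set S ⊆ X satisfies, for every x ∈ S, that l x ≥ 0 and there exists u : U with f x u ∈ S, then S ⊆ V. Hence V contains every safe control-invariant set. -/
theorem viab_maximal {X U : Type*} (f : X → U → X) (l : X → ℝ)
    (S : Set X) (hS : ∀ x ∈ S, l x ≥ 0 ∧ ∃ u : U, f x u ∈ S) :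
    S ⊆ viab f l := by
  intro x hx
  -- step function on the subtype
  have step : ∀ p : {y : X // y ∈ S}, ∃ u : U, f p.1 u ∈ S := fun p => (hS p.1 p.2).2
  classical
  let g : {y : X // y ∈ S} → {y : X // y ∈ S} :=
    fun p => ⟨f p.1 (Classical.choose (step p)), Classical.choose_spec (step p)⟩
  let p : ℕ → {y : X // y ∈ S} := fun k => Nat.rec ⟨x, hx⟩ (fun _ q => g q) k
  let u : ℕ → U := fun k => Classical.choose (step (p k))
  refine ⟨u, ?_⟩
  have htraj : ∀ k, traj f x u k = (p k).1 := by
    intro k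
    induction k with
    | zero => rfl
    | succ n ih => simp [traj, ih, p, g, u]
  intro k
  rw [htraj k]
  exact ((hS _ (p k).2).1)
end

section
/- The viability kernel is the greatest post-fixed point of the safety predecessor operator: defining Φ : Set X → Set X by Φ S = {x | l x ≥ 0 ∧ ∃ u : U, f x u ∈ S}, one has Φ V = V, and every set S with S ⊆ Φ S satisfies S ⊆ V. -/
/-- The safety predecessor operator. -/
def Phi {X U : Type*} (f : X → U → X) (l : X → ℝ) (S : Set X) : Set X :=
  {x | l x ≥ 0 ∧ ∃ u : U, f x u ∈ S}

theorem viab_greatest_post_fixed_point {X U : Type*} (f : X → U → X) (l : X → ℝ) :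
    Phi f l (viab f l) = viab f l ∧
    ∀ S : Set X, S ⊆ Phi f l S → S ⊆ viab f l := by
  classical
  have key : ∀ S : Set X, S ⊆ Phi f l S → S ⊆ viab f l := by
    intro S hS x hx
    -- pick function
    have pick : ∀ s : {y // y ∈ S}, ∃ u : U, f s.1 u ∈ S := by
      intro s; exact (hS s.2).2
    choose c hc using pick
    -- sequence of states in S
    let seq : ℕ → {y // y ∈ S} := fun k =>
      Nat.rec ⟨x, hx⟩ (fun _ s => ⟨f s.1 (c s), hc s⟩) k
    refine ⟨fun k => c (seq k), ?_⟩
    have htraj : ∀ k, traj f x (fun k => c (seq k)) k = (seq k).1 := by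
      intro k
      induction k with
      | zero => rfl
      | succ n ih => simp only [traj, ih]; rfl
    intro k
    rw [htraj k]
    exact (hS (seq k).2).1
  constructor
  · apply Set.Subset.antisymm
    · rintro x ⟨hl, u0, w, hw⟩
      refine ⟨fun k => Nat.rec u0 (fun n _ => w n) k, fun k => ?_⟩
      cases k with
      | zero => exact hl
      | succ n =>
        have : ∀ m, traj f x (fun k => Nat.rec u0 (fun n _ => w n) k) (m + 1)
            = traj f (f x u0) w m := by
          intro m
          induction m with
          | zero => rfl
          | succ p ih =>
            show f (traj f x (fun k => Nat.rec u0 (fun n _ => w n) k) (p + 1)) (w p)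
              = f (traj f (f x u0) w p) (w p)
            rw [ih]
        rw [this n]; exact hw n
    · rintro x ⟨u, hu⟩
      refine ⟨hu 0, u 0, fun k => u (k + 1), fun k => ?_⟩
      have : ∀ m, traj f (f x (u 0)) (fun k => u (k + 1)) m = traj f x u (m + 1) := by
        intro m
        induction m with
        | zero => rfl
        | succ p ih => simp only [traj, ih]
      rw [this k]; exact hu (k + 1)
  · exact key
end

section
/- Soundness of the safety value level set: if there exists a control sequence u : ℕ → U with l (traj x u k) ≥ 0 for all k ≤ K, then V_K x ≥ 0. In other words, the K-step viable set is contained in the super-zero level set of V_K. -/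
noncomputable def safetyVal {X U : Type*} (f : X → U → X) (l : X → ℝ) : ℕ → X → ℝ
  | 0, x => l x
  | K + 1, x => min (l x) (⨆ u : U, safetyVal f l K (f x u))

lemma safetyVal_le {X U : Type*} (f : X → U → X) (l : X → ℝ) {M : ℝ}
    (hM : ∀ x : X, l x ≤ M) : ∀ K x, safetyVal f l K x ≤ M := by
  intro K
  induction K with
  | zero => intro x; exact hM x
  | succ K ih => intro x; exact le_trans (min_le_left _ _) (hM x)

theorem safetyVal_nonneg_of_safe_traj {X U : Type*} [Nonempty U] (f : X → U → X) (l : X → ℝ)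
    (hbdd : ∃ M : ℝ, ∀ x : X, l x ≤ M) (K : ℕ) (x : X)
    (hx : ∃ u : ℕ → U, ∀ k ≤ K, l (traj f x u k) ≥ 0) :
    safetyVal f l K x ≥ 0 := by
  obtain ⟨M, hM⟩ := hbdd
  induction K generalizing x with
  | zero =>
    obtain ⟨u, hu⟩ := hx
    exact hu 0 le_rfl
  | succ K ih =>
    obtain ⟨u, hu⟩ := hx
    refine le_min (hu 0 (Nat.zero_le _)) ?_
    have h1 : safetyVal f l K (f x (u 0)) ≥ 0 := by
      refine ih (f x (u 0)) ⟨fun n => u (n + 1), fun k hk => ?_⟩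
      have : traj f (f x (u 0)) (fun n => u (n + 1)) k = traj f x u (k + 1) := by
        induction k with
        | zero => rfl
        | succ k ihk => simp [traj, ihk (le_of_lt (Nat.lt_of_succ_le hk))]
      rw [this]
      exact hu (k + 1) (Nat.succ_le_succ hk)
    calc (0:ℝ) ≤ safetyVal f l K (f x (u 0)) := h1
      _ ≤ ⨆ u' : U, safetyVal f l K (f x u') :=
        le_ciSup (f := fun u' : U => safetyVal f l K (f x u'))
          ⟨M, by rintro _ ⟨u', rfl⟩; exact safetyVal_le f l hM K _⟩ (u 0)
end
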